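/- arXiv:2603.05814 — 6 statements merged into one kernel-verified Lean document; each statement's English description precedes it below -/
import Mathlib

section
/- Suppose x, d ∈ ℝⁿ satisfy ψ_x(d) < 0 (i.e., d is a descent direction for all the interval objectives G_i at x), and suppose each objective is bounded below along the ray from x in direction d: for every i there exist reals A̲_i, A̅_i with G̲_i(x+td) ≥ A̲_i and G̅_i(x+td) ≥ A̅_i for all t > 0. Then for any parameters 0 < ρ < σ < 1 there exists a nonempty open interval (a,b) ⊂ (0,∞) such that every t ∈ (a,b) simultaneously satisfies the standard Wolfe conditions and the strong Wolfe conditions at x along d. -/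
open scoped BigOperators

noncomputable def pd (n : ℕ) (F : EuclideanSpace ℝ (Fin n) → ℝ)
    (x : EuclideanSpace ℝ (Fin n)) (j : Fin n) : ℝ :=
  fderiv ℝ F x (EuclideanSpace.single j (1 : ℝ))

noncomputable def glo (n : ℕ) (F H : EuclideanSpace ℝ (Fin n) → ℝ)
    (x : EuclideanSpace ℝ (Fin n)) (j : Fin n) : ℝ :=
  min (pd n F x j) (pd n H x j)

noncomputable def ghi (n : ℕ) (F H : EuclideanSpace ℝ (Fin n) → ℝ)
    (x : EuclideanSpace ℝ (Fin n)) (j : Fin n) : ℝ :=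
  max (pd n F x j) (pd n H x j)

noncomputable def gloVec (n : ℕ) (F H : EuclideanSpace ℝ (Fin n) → ℝ)
    (x : EuclideanSpace ℝ (Fin n)) : EuclideanSpace ℝ (Fin n) :=
  WithLp.toLp 2 (fun j => glo n F H x j)

noncomputable def ghiVec (n : ℕ) (F H : EuclideanSpace ℝ (Fin n) → ℝ)
    (x : EuclideanSpace ℝ (Fin n)) : EuclideanSpace ℝ (Fin n) :=
  WithLp.toLp 2 (fun j => ghi n F H x j)

noncomputable def psi (m n : ℕ) (Gl Gu : Fin m → EuclideanSpace ℝ (Fin n) → ℝ)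
    (x v : EuclideanSpace ℝ (Fin n)) : ℝ :=
  ⨆ i : Fin m, (1 / 2 : ℝ) *
    ((∑ j : Fin n, (glo n (Gl i) (Gu i) x j + ghi n (Gl i) (Gu i) x j) * v j) +
     (∑ j : Fin n, (ghi n (Gl i) (Gu i) x j - glo n (Gl i) (Gu i) x j) * |v j|))

def LevelSet (m n : ℕ) (Gl Gu : Fin m → EuclideanSpace ℝ (Fin n) → ℝ)
    (x0 : EuclideanSpace ℝ (Fin n)) : Set (EuclideanSpace ℝ (Fin n)) :=
  {x | ∀ i : Fin m, Gl i x ≤ Gl i x0 ∧ Gu i x ≤ Gu i x0}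

def StdWolfe (m n : ℕ) (Gl Gu : Fin m → EuclideanSpace ℝ (Fin n) → ℝ)
    (ρ σ : ℝ) (x d : EuclideanSpace ℝ (Fin n)) (t : ℝ) : Prop :=
  (∀ i : Fin m,
      Gl i (x + t • d) ≤ Gl i x + ρ * t * psi m n Gl Gu x d ∧
      Gu i (x + t • d) ≤ Gu i x + ρ * t * psi m n Gl Gu x d) ∧
  σ * psi m n Gl Gu x d ≤ psi m n Gl Gu (x + t • d) d

def StrongWolfe (m n : ℕ) (Gl Gu : Fin m → EuclideanSpace ℝ (Fin n) → ℝ)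
    (ρ σ : ℝ) (x d : EuclideanSpace ℝ (Fin n)) (t : ℝ) : Prop :=
  (∀ i : Fin m,
      Gl i (x + t • d) ≤ Gl i x + ρ * t * psi m n Gl Gu x d ∧
      Gu i (x + t • d) ≤ Gu i x + ρ * t * psi m n Gl Gu x d) ∧
  |psi m n Gl Gu (x + t • d) d| ≤ σ * |psi m n Gl Gu x d|

def AssumptionA1 (m n : ℕ) (Gl Gu : Fin m → EuclideanSpace ℝ (Fin n) → ℝ)
    (x0 : EuclideanSpace ℝ (Fin n)) : Prop :=
  ∀ i : Fin m, ∃ L : ℝ, 0 < L ∧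
    ∀ y ∈ LevelSet m n Gl Gu x0, ∀ z ∈ LevelSet m n Gl Gu x0,
      ‖gloVec n (Gl i) (Gu i) y - gloVec n (Gl i) (Gu i) z‖ ≤ L * ‖y - z‖ ∧
      ‖ghiVec n (Gl i) (Gu i) y - ghiVec n (Gl i) (Gu i) z‖ ≤ L * ‖y - z‖

def AssumptionA2 (m n : ℕ) (Gl Gu : Fin m → EuclideanSpace ℝ (Fin n) → ℝ)
    (x0 : EuclideanSpace ℝ (Fin n)) : Prop :=
  ∀ y : ℕ → EuclideanSpace ℝ (Fin n),
    (∀ k, y k ∈ LevelSet m n Gl Gu x0) →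
    (∀ (i : Fin m) (k : ℕ), Gl i (y (k+1)) ≤ Gl i (y k) ∧ Gu i (y (k+1)) ≤ Gu i (y k)) →
    ∀ i : Fin m, (∃ Cl : ℝ, ∀ k, Cl ≤ Gl i (y k)) ∧ (∃ Cu : ℝ, ∀ k, Cu ≤ Gu i (y k))

section WolfeAux

open scoped BigOperators
open Filter

noncomputable def psiTerm (m n : ℕ) (Gl Gu : Fin m → EuclideanSpace ℝ (Fin n) → ℝ)
    (i : Fin m) (y v : EuclideanSpace ℝ (Fin n)) : ℝ :=
  (1 / 2 : ℝ) *
    ((∑ j : Fin n, (glo n (Gl i) (Gu i) y j + ghi n (Gl i) (Gu i) y j) * v j) +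
     (∑ j : Fin n, (ghi n (Gl i) (Gu i) y j - glo n (Gl i) (Gu i) y j) * |v j|))

lemma psi_eq_iSup_psiTerm (m n : ℕ) (Gl Gu : Fin m → EuclideanSpace ℝ (Fin n) → ℝ)
    (y v : EuclideanSpace ℝ (Fin n)) :
    psi m n Gl Gu y v = ⨆ i : Fin m, psiTerm m n Gl Gu i y v := rfl

lemma euclid_sum_single (n : ℕ) (v : EuclideanSpace ℝ (Fin n)) :
    ∑ j : Fin n, v j • EuclideanSpace.single j (1:ℝ) = v := by
  ext k
  rw [WithLp.ofLp_sum, Finset.sum_apply]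
  simp [EuclideanSpace.single_apply]

lemma fderiv_apply_eq_sum {n : ℕ} (F : EuclideanSpace ℝ (Fin n) → ℝ)
    (y v : EuclideanSpace ℝ (Fin n)) :
    fderiv ℝ F y v = ∑ j : Fin n, v j * pd n F y j := by
  conv_lhs => rw [← euclid_sum_single n v]
  rw [map_sum]
  simp [pd, smul_eq_mul]

lemma pd_continuous {n : ℕ} (F : EuclideanSpace ℝ (Fin n) → ℝ)
    (hF : ContDiff ℝ 1 F) (j : Fin n) : Continuous fun y => pd n F y j :=
  (hF.continuous_fderiv one_ne_zero).clm_apply continuous_const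

lemma termAux_le (a b p v : ℝ) (hap : a ≤ p) (hpb : p ≤ b) :
    v * p ≤ (1/2 : ℝ) * ((a+b)*v + (b-a)*|v|) := by
  rcases le_or_gt 0 v with hv | hv
  · rw [abs_of_nonneg hv]; nlinarith
  · rw [abs_of_neg hv]; nlinarith

lemma psiTerm_le_psi (m n : ℕ) (Gl Gu : Fin m → EuclideanSpace ℝ (Fin n) → ℝ)
    (i : Fin m) (y v : EuclideanSpace ℝ (Fin n)) :
    psiTerm m n Gl Gu i y v ≤ psi m n Gl Gu y v := by
  rw [psi_eq_iSup_psiTerm]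
  exact le_ciSup (f := fun i => psiTerm m n Gl Gu i y v)
    (Set.Finite.bddAbove (Set.finite_range _)) i

lemma fderiv_le_psiTerm {m n : ℕ} (Gl Gu : Fin m → EuclideanSpace ℝ (Fin n) → ℝ)
    (i : Fin m) (f : EuclideanSpace ℝ (Fin n) → ℝ)
    (hlo : ∀ y j, glo n (Gl i) (Gu i) y j ≤ pd n f y j)
    (hhi : ∀ y j, pd n f y j ≤ ghi n (Gl i) (Gu i) y j)
    (y v : EuclideanSpace ℝ (Fin n)) :
    fderiv ℝ f y v ≤ psiTerm m n Gl Gu i y v := by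
  rw [fderiv_apply_eq_sum f y v]
  unfold psiTerm
  rw [← Finset.sum_add_distrib, Finset.mul_sum]
  exact Finset.sum_le_sum fun j _ => termAux_le _ _ _ _ (hlo y j) (hhi y j)

lemma fderiv_Gl_le_psi {m n : ℕ} (Gl Gu : Fin m → EuclideanSpace ℝ (Fin n) → ℝ)
    (i : Fin m) (y v : EuclideanSpace ℝ (Fin n)) :
    fderiv ℝ (Gl i) y v ≤ psi m n Gl Gu y v :=
  (fderiv_le_psiTerm Gl Gu i (Gl i) (fun y j => min_le_left _ _)
    (fun y j => le_max_left _ _) y v).trans (psiTerm_le_psi m n Gl Gu i y v)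

lemma fderiv_Gu_le_psi {m n : ℕ} (Gl Gu : Fin m → EuclideanSpace ℝ (Fin n) → ℝ)
    (i : Fin m) (y v : EuclideanSpace ℝ (Fin n)) :
    fderiv ℝ (Gu i) y v ≤ psi m n Gl Gu y v :=
  (fderiv_le_psiTerm Gl Gu i (Gu i) (fun y j => min_le_right _ _)
    (fun y j => le_max_right _ _) y v).trans (psiTerm_le_psi m n Gl Gu i y v)

lemma psiTerm_continuous {m n : ℕ} (Gl Gu : Fin m → EuclideanSpace ℝ (Fin n) → ℝ)
    (hGl : ∀ i, ContDiff ℝ 1 (Gl i)) (hGu : ∀ i, ContDiff ℝ 1 (Gu i))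
    (i : Fin m) (v : EuclideanSpace ℝ (Fin n)) :
    Continuous fun y => psiTerm m n Gl Gu i y v := by
  unfold psiTerm glo ghi
  apply continuous_const.mul
  apply Continuous.add
  · apply continuous_finset_sum
    intro j _
    exact (((pd_continuous _ (hGl i) j).min (pd_continuous _ (hGu i) j)).add
      ((pd_continuous _ (hGl i) j).max (pd_continuous _ (hGu i) j))).mul continuous_const
  · apply continuous_finset_sum
    intro j _
    exact (((pd_continuous _ (hGl i) j).max (pd_continuous _ (hGu i) j)).sub
      ((pd_continuous _ (hGl i) j).min (pd_continuous _ (hGu i) j))).mul continuous_const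

lemma psi_continuous {m n : ℕ} (hm : 0 < m) (Gl Gu : Fin m → EuclideanSpace ℝ (Fin n) → ℝ)
    (hGl : ∀ i, ContDiff ℝ 1 (Gl i)) (hGu : ∀ i, ContDiff ℝ 1 (Gu i))
    (v : EuclideanSpace ℝ (Fin n)) :
    Continuous fun y => psi m n Gl Gu y v := by
  haveI : Nonempty (Fin m) := ⟨⟨0, hm⟩⟩
  have heq : (fun y => psi m n Gl Gu y v)
      = fun y => Finset.univ.sup' Finset.univ_nonempty (fun i => psiTerm m n Gl Gu i y v) := by
    funext y
    rw [psi_eq_iSup_psiTerm, Finset.sup'_univ_eq_ciSup]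
  rw [heq]
  exact Continuous.finset_sup'_apply _ fun i _ => psiTerm_continuous Gl Gu hGl hGu i v

lemma decrease_of_deriv_lt {f f' : ℝ → ℝ} {K T : ℝ} (hT : 0 < T)
    (hderiv : ∀ t, HasDerivAt f (f' t) t)
    (hbound : ∀ t ∈ Set.Ioo (0:ℝ) T, f' t < K) :
    f T < f 0 + K * T := by
  obtain ⟨c, hc, hslope⟩ := exists_hasDerivAt_eq_slope f f' hT
    (fun t _ => (hderiv t).continuousAt.continuousWithinAt) (fun t _ => hderiv t)
  have h1 : f' c < K := hbound c hc
  rw [hslope, sub_zero] at h1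
  have h2 := (div_lt_iff₀ hT).1 h1
  linarith

lemma line_hasDerivAt {n : ℕ} (f : EuclideanSpace ℝ (Fin n) → ℝ) (hf : Differentiable ℝ f)
    (x d : EuclideanSpace ℝ (Fin n)) (t : ℝ) :
    HasDerivAt (fun s : ℝ => f (x + s • d)) (fderiv ℝ f (x + t • d) d) t := by
  have h1 : HasDerivAt (fun s : ℝ => x + s • d) d t := by
    simpa using ((hasDerivAt_id t).smul_const d).const_add x
  exact (hf (x + t • d)).hasFDerivAt.comp_hasDerivAt t h1

end WolfeAux

theorem wolfe_interval_exists (m n : ℕ) (hm : 0 < m) (hn : 0 < n)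
    (Gl Gu : Fin m → EuclideanSpace ℝ (Fin n) → ℝ)
    (hGl : ∀ i, ContDiff ℝ 1 (Gl i)) (hGu : ∀ i, ContDiff ℝ 1 (Gu i))
    (hle : ∀ (i : Fin m) (x : EuclideanSpace ℝ (Fin n)), Gl i x ≤ Gu i x)
    (ρ σ : ℝ) (hρ : 0 < ρ) (hρσ : ρ < σ) (hσ : σ < 1)
    (x d : EuclideanSpace ℝ (Fin n))
    (hdesc : psi m n Gl Gu x d < 0)
    (hbdd : ∀ i : Fin m, ∃ Al Au : ℝ, ∀ t : ℝ, 0 < t →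
      Al ≤ Gl i (x + t • d) ∧ Au ≤ Gu i (x + t • d)) :
    ∃ a b : ℝ, 0 < a ∧ a < b ∧ ∀ t ∈ Set.Ioo a b,
      StdWolfe m n Gl Gu ρ σ x d t ∧ StrongWolfe m n Gl Gu ρ σ x d t := by
  classical
  set ψ : ℝ := psi m n Gl Gu x d with hψdef
  set c : ℝ := (ρ + σ) / 2 with hcdef
  have hρc : ρ < c := by rw [hcdef]; linarith
  have hcσ : c < σ := by rw [hcdef]; linarith
  have hc1 : c < 1 := lt_trans hcσ hσ
  have hc0 : 0 < c := by rw [hcdef]; linarith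
  have hσ0 : 0 < σ := lt_trans hρ hρσ
  set K : ℝ := c * ψ with hKdef
  have hK0 : K < 0 := mul_neg_of_pos_of_neg hc0 hdesc
  have hKρ : K < ρ * ψ := by rw [hKdef]; nlinarith
  have hσK : σ * ψ < K := by rw [hKdef]; nlinarith
  have hψK : ψ < K := by rw [hKdef]; nlinarith
  set Ψ : ℝ → ℝ := fun t => psi m n Gl Gu (x + t • d) d with hΨdef
  have hΨ0 : Ψ 0 = ψ := by rw [hΨdef]; simp; rfl
  have hΨcont : Continuous Ψ := by
    rw [hΨdef]
    exact (psi_continuous hm Gl Gu hGl hGu d).comp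
      (continuous_const.add (continuous_id.smul continuous_const))
  have hdGl : ∀ i, Differentiable ℝ (Gl i) := fun i => (hGl i).differentiable one_ne_zero
  have hdGu : ∀ i, Differentiable ℝ (Gu i) := fun i => (hGu i).differentiable one_ne_zero
  have hDl : ∀ (i : Fin m) (t : ℝ),
      HasDerivAt (fun s : ℝ => Gl i (x + s • d)) (fderiv ℝ (Gl i) (x + t • d) d) t :=
    fun i t => line_hasDerivAt (Gl i) (hdGl i) x d t
  have hDu : ∀ (i : Fin m) (t : ℝ),
      HasDerivAt (fun s : ℝ => Gu i (x + s • d)) (fderiv ℝ (Gu i) (x + t • d) d) t :=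
    fun i t => line_hasDerivAt (Gu i) (hdGu i) x d t
  have hlel : ∀ (i : Fin m) (t : ℝ), fderiv ℝ (Gl i) (x + t • d) d ≤ Ψ t :=
    fun i t => fderiv_Gl_le_psi Gl Gu i (x + t • d) d
  have hleu : ∀ (i : Fin m) (t : ℝ), fderiv ℝ (Gu i) (x + t • d) d ≤ Ψ t :=
    fun i t => fderiv_Gu_le_psi Gl Gu i (x + t • d) d
  -- the set where Ψ has climbed back up to K is nonempty
  have hSne : ∃ T : ℝ, 0 < T ∧ K ≤ Ψ T := by
    by_contra hcon
    push_neg at hcon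
    obtain ⟨Al, Au, hA⟩ := hbdd ⟨0, hm⟩
    set T : ℝ := max 1 ((Al - Gl ⟨0, hm⟩ x) / K + 1) with hTdef
    have hT1 : 0 < T := lt_of_lt_of_le one_pos (le_max_left _ _)
    have hdec : Gl ⟨0, hm⟩ (x + T • d) < Gl ⟨0, hm⟩ x + K * T := by
      have h := decrease_of_deriv_lt hT1 (hDl ⟨0, hm⟩)
        (fun t ht => lt_of_le_of_lt (hlel ⟨0, hm⟩ t) (hcon t ht.1))
      simpa using h
    have hTge : (Al - Gl ⟨0, hm⟩ x) / K + 1 ≤ T := le_max_right _ _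
    have hmul : K * T ≤ K * ((Al - Gl ⟨0, hm⟩ x) / K + 1) :=
      mul_le_mul_of_nonpos_left hTge (le_of_lt hK0)
    have hfield : K * ((Al - Gl ⟨0, hm⟩ x) / K + 1) = Al - Gl ⟨0, hm⟩ x + K := by
      have hKne : K ≠ 0 := ne_of_lt hK0
      field_simp
    have hAl := (hA T hT1).1
    rw [hfield] at hmul
    linarith
  obtain ⟨T₁, hT₁pos, hT₁⟩ := hSne
  set S : Set ℝ := {t : ℝ | 0 < t ∧ K ≤ Ψ t} with hSdef
  have hSne' : S.Nonempty := ⟨T₁, hT₁pos, hT₁⟩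
  have hSbd : BddBelow S := ⟨0, fun t ht => le_of_lt ht.1⟩
  set t₀ : ℝ := sInf S with ht₀def
  -- t₀ is positive
  obtain ⟨δ, hδpos, hδ⟩ := Metric.continuousAt_iff.1 hΨcont.continuousAt (K - ψ) (by linarith)
  have hδlb : ∀ s ∈ S, δ ≤ s := by
    intro s hs
    by_contra hlt
    push_neg at hlt
    have hd : dist s 0 < δ := by
      rw [Real.dist_eq, sub_zero, abs_of_pos hs.1]; exact hlt
    have h2 := hδ hd
    rw [hΨ0, Real.dist_eq] at h2
    have h3 : Ψ s < K := by
      have := (abs_lt.1 h2).2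
      linarith
    exact absurd hs.2 (not_le.2 h3)
  have ht₀pos : 0 < t₀ := lt_of_lt_of_le hδpos (le_csInf hSne' hδlb)
  have hlt_t₀ : ∀ τ : ℝ, 0 < τ → τ < t₀ → Ψ τ < K := by
    intro τ hτ hτt
    by_contra hcon
    push_neg at hcon
    exact absurd (csInf_le hSbd ⟨hτ, hcon⟩) (not_le.2 hτt)
  have hK_le : K ≤ Ψ t₀ := by
    have h1 : t₀ ∈ closure S := csInf_mem_closure hSne' hSbd
    have h2 : closure S ⊆ {t : ℝ | K ≤ Ψ t} :=
      closure_minimal (fun t ht => ht.2) (isClosed_le continuous_const hΨcont)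
    exact h2 h1
  have hΨ_le : Ψ t₀ ≤ K := by
    have htend : Filter.Tendsto Ψ (nhdsWithin t₀ (Set.Iio t₀)) (nhds (Ψ t₀)) :=
      hΨcont.continuousAt.continuousWithinAt
    refine le_of_tendsto htend ?_
    filter_upwards [Ioo_mem_nhdsLT_of_mem (Set.mem_Ioc.2 ⟨ht₀pos, le_refl t₀⟩)] with τ hτ
    exact le_of_lt (hlt_t₀ τ hτ.1 hτ.2)
  have hΨt₀ : Ψ t₀ = K := le_antisymm hΨ_le hK_le
  -- strict sufficient decrease at t₀
  have hKt₀ : K * t₀ < ρ * t₀ * ψ := by nlinarith [mul_lt_mul_of_pos_right hKρ ht₀pos]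
  have hdecl : ∀ i : Fin m, Gl i (x + t₀ • d) < Gl i x + ρ * t₀ * ψ := by
    intro i
    have h := decrease_of_deriv_lt ht₀pos (hDl i)
      (fun t ht => lt_of_le_of_lt (hlel i t) (hlt_t₀ t ht.1 ht.2))
    simp only [zero_smul, add_zero] at h
    linarith
  have hdecu : ∀ i : Fin m, Gu i (x + t₀ • d) < Gu i x + ρ * t₀ * ψ := by
    intro i
    have h := decrease_of_deriv_lt ht₀pos (hDu i)
      (fun t ht => lt_of_le_of_lt (hleu i t) (hlt_t₀ t ht.1 ht.2))
    simp only [zero_smul, add_zero] at h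
    linarith
  -- strict curvature conditions at t₀
  have hcurl : σ * ψ < Ψ t₀ := by rw [hΨt₀]; exact hσK
  have hcuru : Ψ t₀ < -(σ * ψ) := by
    rw [hΨt₀]
    have : σ * ψ < 0 := mul_neg_of_pos_of_neg hσ0 hdesc
    linarith
  -- all the strict conditions hold eventually near t₀
  have hcontline : Continuous fun t : ℝ => x + t • d :=
    continuous_const.add (continuous_id.smul continuous_const)
  have hev : ∀ᶠ t in nhds t₀,
      (∀ i : Fin m, Gl i (x + t • d) < Gl i x + ρ * t * ψ ∧
        Gu i (x + t • d) < Gu i x + ρ * t * ψ) ∧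
      σ * ψ < Ψ t ∧ Ψ t < -(σ * ψ) := by
    have hlin : Continuous fun t : ℝ => ρ * t * ψ :=
      (continuous_const.mul continuous_id).mul continuous_const
    have e1 : ∀ i : Fin m, ∀ᶠ t in nhds t₀,
        Gl i (x + t • d) < Gl i x + ρ * t * ψ ∧ Gu i (x + t • d) < Gu i x + ρ * t * ψ := by
      intro i
      have a1 : ∀ᶠ t in nhds t₀, Gl i (x + t • d) < Gl i x + ρ * t * ψ :=
        (((hdGl i).continuous.comp hcontline).continuousAt).eventually_lt
          ((continuous_const.add hlin).continuousAt) (hdecl i)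
      have a2 : ∀ᶠ t in nhds t₀, Gu i (x + t • d) < Gu i x + ρ * t * ψ :=
        (((hdGu i).continuous.comp hcontline).continuousAt).eventually_lt
          ((continuous_const.add hlin).continuousAt) (hdecu i)
      exact a1.and a2
    have e3 : ∀ᶠ t in nhds t₀, σ * ψ < Ψ t :=
      (continuous_const.continuousAt).eventually_lt hΨcont.continuousAt hcurl
    have e4 : ∀ᶠ t in nhds t₀, Ψ t < -(σ * ψ) :=
      hΨcont.continuousAt.eventually_lt continuous_const.continuousAt hcuru
    exact ((Filter.eventually_all.2 e1).and (e3.and e4))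
  obtain ⟨ε, hεpos, hε⟩ := Metric.eventually_nhds_iff.1 hev
  refine ⟨t₀ - min (ε / 2) (t₀ / 2), t₀ + min (ε / 2) (t₀ / 2), ?_, ?_, ?_⟩
  · have h1 : min (ε / 2) (t₀ / 2) ≤ t₀ / 2 := min_le_right _ _
    linarith
  · have h1 : 0 < min (ε / 2) (t₀ / 2) := lt_min (by linarith) (by linarith)
    linarith
  · intro t ht
    have hdist : dist t t₀ < ε := by
      rw [Real.dist_eq, abs_sub_lt_iff]
      have h1 := ht.1
      have h2 := ht.2
      have h3 : min (ε / 2) (t₀ / 2) ≤ ε / 2 := min_le_left _ _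
      constructor <;> linarith
    obtain ⟨hIneq, hσlt, hub⟩ := hε hdist
    constructor
    · exact ⟨fun i => ⟨le_of_lt (hIneq i).1, le_of_lt (hIneq i).2⟩, le_of_lt hσlt⟩
    · refine ⟨fun i => ⟨le_of_lt (hIneq i).1, le_of_lt (hIneq i).2⟩, ?_⟩
      show |Ψ t| ≤ σ * |ψ|
      rw [abs_of_neg hdesc, abs_le]
      constructor
      · have hr : -(σ * -ψ) = σ * ψ := by ring
        rw [hr]; exact le_of_lt hσlt
      · have hr : σ * -ψ = -(σ * ψ) := by ring
        rw [hr]; exact le_of_lt hub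
end

section
/- Let μ ∈ [0,1). Suppose sequences {x^k} ⊂ ℝⁿ, {β_k}_{k≥1} ⊂ ℝ and {d^k} ⊂ ℝⁿ satisfy d⁰ = v(x⁰), d^k = v(x^k) + β_k d^{k−1} for k ≥ 1, v(x^k) ≠ 0 for all k, and for every k ≥ 1: β_k ≥ 0, and if ψ_{x^k}(d^{k−1}) > 0 then β_k·ψ_{x^k}(d^{k−1}) ≤ −μ·ψ_{x^k}(v(x^k)). Then the sufficient descent condition holds with constant c = 1−μ: for all k ≥ 0, ψ_{x^k}(d^k) ≤ (1−μ)·ψ_{x^k}(v(x^k)) < 0. -/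
open scoped BigOperators

lemma myPsi_zero {m n : ℕ} (hm : 0 < m) (Gl Gu : Fin m → EuclideanSpace ℝ (Fin n) → ℝ)
    (x : EuclideanSpace ℝ (Fin n)) : psi m n Gl Gu x 0 = 0 := by
  haveI : Nonempty (Fin m) := ⟨⟨0, hm⟩⟩
  unfold psi
  have h : ∀ i : Fin m, (1 / 2 : ℝ) *
      ((∑ j : Fin n, (glo n (Gl i) (Gu i) x j + ghi n (Gl i) (Gu i) x j) * (0 : EuclideanSpace ℝ (Fin n)) j) +
       (∑ j : Fin n, (ghi n (Gl i) (Gu i) x j - glo n (Gl i) (Gu i) x j) * |(0 : EuclideanSpace ℝ (Fin n)) j|)) = 0 := by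
    intro i
    simp
  simp only [h]
  exact ciSup_const

lemma myPsi_sublinear {m n : ℕ} (hm : 0 < m) (Gl Gu : Fin m → EuclideanSpace ℝ (Fin n) → ℝ)
    (x u w : EuclideanSpace ℝ (Fin n)) {β : ℝ} (hβ : 0 ≤ β) :
    psi m n Gl Gu x (u + β • w) ≤ psi m n Gl Gu x u + β * psi m n Gl Gu x w := by
  haveI : Nonempty (Fin m) := ⟨⟨0, hm⟩⟩
  set f : Fin m → EuclideanSpace ℝ (Fin n) → ℝ := fun i v => (1 / 2 : ℝ) *
    ((∑ j : Fin n, (glo n (Gl i) (Gu i) x j + ghi n (Gl i) (Gu i) x j) * v j) +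
     (∑ j : Fin n, (ghi n (Gl i) (Gu i) x j - glo n (Gl i) (Gu i) x j) * |v j|)) with hf
  have hpsi : ∀ v, psi m n Gl Gu x v = ⨆ i, f i v := fun v => rfl
  rw [hpsi, hpsi, hpsi]
  apply ciSup_le
  intro i
  have hbdd : ∀ v : EuclideanSpace ℝ (Fin n), f i v ≤ ⨆ i, f i v := fun v =>
    le_ciSup (f := fun i => f i v) (Set.Finite.bddAbove (Set.finite_range _)) i
  have key : f i (u + β • w) ≤ f i u + β * f i w := by
    rw [hf]
    simp only
    have h1 : ∀ j : Fin n, (u + β • w) j = u j + β * w j := by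
      intro j; rfl
    have h2 : (∑ j : Fin n, (glo n (Gl i) (Gu i) x j + ghi n (Gl i) (Gu i) x j) * (u + β • w) j)
        = (∑ j : Fin n, (glo n (Gl i) (Gu i) x j + ghi n (Gl i) (Gu i) x j) * u j)
          + β * (∑ j : Fin n, (glo n (Gl i) (Gu i) x j + ghi n (Gl i) (Gu i) x j) * w j) := by
      rw [Finset.mul_sum, ← Finset.sum_add_distrib]
      apply Finset.sum_congr rfl
      intro j _
      rw [h1 j]; ring
    have h3 : (∑ j : Fin n, (ghi n (Gl i) (Gu i) x j - glo n (Gl i) (Gu i) x j) * |(u + β • w) j|)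
        ≤ (∑ j : Fin n, (ghi n (Gl i) (Gu i) x j - glo n (Gl i) (Gu i) x j) * |u j|)
          + β * (∑ j : Fin n, (ghi n (Gl i) (Gu i) x j - glo n (Gl i) (Gu i) x j) * |w j|) := by
      rw [Finset.mul_sum, ← Finset.sum_add_distrib]
      apply Finset.sum_le_sum
      intro j _
      have hb : 0 ≤ ghi n (Gl i) (Gu i) x j - glo n (Gl i) (Gu i) x j := by
        have := min_le_max (a := pd n (Gl i) x j) (b := pd n (Gu i) x j)
        simp only [ghi, glo]; linarith
      have habs : |(u + β • w) j| ≤ |u j| + β * |w j| := by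
        rw [h1 j]
        calc |u j + β * w j| ≤ |u j| + |β * w j| := abs_add_le _ _
          _ = |u j| + β * |w j| := by rw [abs_mul, abs_of_nonneg hβ]
      nlinarith [abs_nonneg (u j), abs_nonneg (w j)]
    linarith
  calc f i (u + β • w) ≤ f i u + β * f i w := key
    _ ≤ (⨆ i, f i u) + β * (⨆ i, f i w) := by
        have := hbdd u
        have h2 := hbdd w
        nlinarith [hbdd u, hbdd w]

theorem sufficient_descent_general (m n : ℕ) (hm : 0 < m) (hn : 0 < n)
    (Gl Gu : Fin m → EuclideanSpace ℝ (Fin n) → ℝ)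
    (hGl : ∀ i, ContDiff ℝ 1 (Gl i)) (hGu : ∀ i, ContDiff ℝ 1 (Gu i))
    (hle : ∀ (i : Fin m) (x : EuclideanSpace ℝ (Fin n)), Gl i x ≤ Gu i x)
    (vv : EuclideanSpace ℝ (Fin n) → EuclideanSpace ℝ (Fin n))
    (hvmin : ∀ y w : EuclideanSpace ℝ (Fin n),
      psi m n Gl Gu y (vv y) + (1/2) * ‖vv y‖^2 ≤ psi m n Gl Gu y w + (1/2) * ‖w‖^2)
    (μ : ℝ) (hμ0 : 0 ≤ μ) (hμ1 : μ < 1)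
    (x d : ℕ → EuclideanSpace ℝ (Fin n)) (β : ℕ → ℝ)
    (hd0 : d 0 = vv (x 0))
    (hdk : ∀ k : ℕ, d (k+1) = vv (x (k+1)) + β (k+1) • d k)
    (hvne : ∀ k : ℕ, vv (x k) ≠ 0)
    (hβ : ∀ k : ℕ, 0 ≤ β (k+1) ∧
      (0 < psi m n Gl Gu (x (k+1)) (d k) →
        β (k+1) * psi m n Gl Gu (x (k+1)) (d k)
          ≤ -μ * psi m n Gl Gu (x (k+1)) (vv (x (k+1))))) :
    ∀ k : ℕ, psi m n Gl Gu (x k) (d k) ≤ (1 - μ) * psi m n Gl Gu (x k) (vv (x k)) ∧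
      (1 - μ) * psi m n Gl Gu (x k) (vv (x k)) < 0 := by
  haveI : Nonempty (Fin m) := ⟨⟨0, hm⟩⟩
  -- key fact: psi (x k) (vv (x k)) < 0
  have hneg : ∀ k : ℕ, psi m n Gl Gu (x k) (vv (x k)) < 0 := by
    intro k
    have h0 := hvmin (x k) 0
    rw [myPsi_zero hm] at h0
    simp only [norm_zero] at h0
    have hv : 0 < ‖vv (x k)‖ := norm_pos_iff.mpr (hvne k)
    nlinarith [sq_nonneg ‖vv (x k)‖]
  intro k
  have h1μ : 0 < 1 - μ := by linarith
  constructor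
  · cases k with
    | zero =>
        rw [hd0]
        nlinarith [hneg 0]
    | succ k =>
        rw [hdk k]
        obtain ⟨hβ0, hβ1⟩ := hβ k
        have hsub := myPsi_sublinear hm Gl Gu (x (k+1)) (vv (x (k+1))) (d k) hβ0
        by_cases hc : 0 < psi m n Gl Gu (x (k+1)) (d k)
        · have := hβ1 hc
          linarith
        · push_neg at hc
          nlinarith [hneg (k+1)]
  · exact mul_neg_of_pos_of_neg h1μ (hneg k)
end

section
/- (Zoutendijk condition) Assume Assumptions A1 and A2 hold for the initial point x⁰. Consider iterates x^{k+1} = x^k + t_k d^k for k ≥ 0, where each d^k ∈ ℝⁿ satisfies ψ_{x^k}(d^k) < 0 and each t_k > 0 satisfies the standard Wolfe conditions at x^k along d^k. Then Σ_{k≥0} [ψ_{x^k}(d^k)]² / ‖d^k‖² < +∞. -/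
open scoped BigOperators

/- ------------------ auxiliary lemmas ------------------ -/

lemma abs_sum_mul_le' {n : ℕ} (u w : EuclideanSpace ℝ (Fin n)) :
    |∑ j, u j * w j| ≤ ‖u‖ * ‖w‖ := by
  have h := abs_real_inner_le_norm u w
  simpa [PiLp.inner_apply, RCLike.inner_apply, conj_trivial, mul_comm] using h

noncomputable def absVec {n : ℕ} (v : EuclideanSpace ℝ (Fin n)) : EuclideanSpace ℝ (Fin n) :=
  WithLp.toLp 2 (fun j => |v j|)

lemma norm_absVec {n : ℕ} (v : EuclideanSpace ℝ (Fin n)) : ‖absVec v‖ = ‖v‖ := by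
  rw [EuclideanSpace.norm_eq, EuclideanSpace.norm_eq]
  congr 1
  apply Finset.sum_congr rfl
  intro j _
  simp [absVec, sq_abs]

lemma key_ineq {n : ℕ} (a A b B v : EuclideanSpace ℝ (Fin n)) (C : ℝ)
    (ha : ‖a - A‖ ≤ C) (hb : ‖b - B‖ ≤ C) :
    (1/2 : ℝ) * ((∑ j, (a j + b j) * v j) + (∑ j, (b j - a j) * |v j|)) ≤
    (1/2 : ℝ) * ((∑ j, (A j + B j) * v j) + (∑ j, (B j - A j) * |v j|)) + 2 * C * ‖v‖ := by
  have h1 : |∑ j, (a j - A j) * v j| ≤ C * ‖v‖ := by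
    have h := abs_sum_mul_le' (a - A) v
    simp only [PiLp.sub_apply] at h
    exact h.trans (mul_le_mul_of_nonneg_right ha (norm_nonneg v))
  have h2 : |∑ j, (b j - B j) * v j| ≤ C * ‖v‖ := by
    have h := abs_sum_mul_le' (b - B) v
    simp only [PiLp.sub_apply] at h
    exact h.trans (mul_le_mul_of_nonneg_right hb (norm_nonneg v))
  have h3 : abs (∑ j, (b j - B j) * |v j|) ≤ C * ‖v‖ := by
    have h := abs_sum_mul_le' (b - B) (absVec v)
    rw [norm_absVec] at h
    simp only [PiLp.sub_apply, absVec, PiLp.toLp_apply] at h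
    exact h.trans (mul_le_mul_of_nonneg_right hb (norm_nonneg v))
  have h4 : abs (∑ j, (a j - A j) * |v j|) ≤ C * ‖v‖ := by
    have h := abs_sum_mul_le' (a - A) (absVec v)
    rw [norm_absVec] at h
    simp only [PiLp.sub_apply, absVec, PiLp.toLp_apply] at h
    exact h.trans (mul_le_mul_of_nonneg_right ha (norm_nonneg v))
  have e1 : ∑ j, (a j + b j) * v j
      = (∑ j, (A j + B j) * v j) + ((∑ j, (a j - A j) * v j) + (∑ j, (b j - B j) * v j)) := by
    rw [← Finset.sum_add_distrib, ← Finset.sum_add_distrib]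
    exact Finset.sum_congr rfl fun j _ => by ring
  have e2 : ∑ j, (b j - a j) * |v j|
      = (∑ j, (B j - A j) * |v j|) + ((∑ j, (b j - B j) * |v j|) - (∑ j, (a j - A j) * |v j|)) := by
    rw [← Finset.sum_sub_distrib, ← Finset.sum_add_distrib]
    exact Finset.sum_congr rfl fun j _ => by ring
  rw [e1, e2]
  linarith [(abs_le.mp h1).2, (abs_le.mp h2).2, (abs_le.mp h3).2, (abs_le.mp h4).1]

lemma psi_lip (m n : ℕ) (hm : 0 < m) (Gl Gu : Fin m → EuclideanSpace ℝ (Fin n) → ℝ)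
    (x y v : EuclideanSpace ℝ (Fin n)) (C : ℝ)
    (h : ∀ i : Fin m, ‖gloVec n (Gl i) (Gu i) x - gloVec n (Gl i) (Gu i) y‖ ≤ C ∧
        ‖ghiVec n (Gl i) (Gu i) x - ghiVec n (Gl i) (Gu i) y‖ ≤ C) :
    psi m n Gl Gu x v ≤ psi m n Gl Gu y v + 2 * C * ‖v‖ := by
  haveI : Nonempty (Fin m) := Fin.pos_iff_nonempty.mp hm
  unfold psi
  apply ciSup_le
  intro i
  have key := key_ineq (gloVec n (Gl i) (Gu i) x) (gloVec n (Gl i) (Gu i) y)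
      (ghiVec n (Gl i) (Gu i) x) (ghiVec n (Gl i) (Gu i) y) v C (h i).1 (h i).2
  refine le_trans ?_ (add_le_add_left
    (le_ciSup (Set.Finite.bddAbove (Set.finite_range _)) i) (2 * C * ‖v‖))
  exact key

lemma psi_zero (m n : ℕ) (hm : 0 < m) (Gl Gu : Fin m → EuclideanSpace ℝ (Fin n) → ℝ)
    (x : EuclideanSpace ℝ (Fin n)) : psi m n Gl Gu x 0 = 0 := by
  haveI : Nonempty (Fin m) := Fin.pos_iff_nonempty.mp hm
  have hz : ∀ j : Fin n, (0 : EuclideanSpace ℝ (Fin n)) j = 0 := fun _ => rfl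
  simp [psi, hz]

theorem zoutendijk (m n : ℕ) (hm : 0 < m) (hn : 0 < n)
    (Gl Gu : Fin m → EuclideanSpace ℝ (Fin n) → ℝ)
    (hGl : ∀ i, ContDiff ℝ 1 (Gl i)) (hGu : ∀ i, ContDiff ℝ 1 (Gu i))
    (hle : ∀ (i : Fin m) (x : EuclideanSpace ℝ (Fin n)), Gl i x ≤ Gu i x)
    (ρ σ : ℝ) (hρ : 0 < ρ) (hρσ : ρ < σ) (hσ : σ < 1)
    (x d : ℕ → EuclideanSpace ℝ (Fin n)) (t : ℕ → ℝ)
    (hx : ∀ k : ℕ, x (k+1) = x k + t k • d k)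
    (hdesc : ∀ k : ℕ, psi m n Gl Gu (x k) (d k) < 0)
    (ht : ∀ k : ℕ, 0 < t k ∧ StdWolfe m n Gl Gu ρ σ (x k) (d k) (t k))
    (hA1 : AssumptionA1 m n Gl Gu (x 0))
    (hA2 : AssumptionA2 m n Gl Gu (x 0)) :
    Summable (fun k : ℕ => (psi m n Gl Gu (x k) (d k))^2 / ‖d k‖^2) := by
  haveI : Nonempty (Fin m) := Fin.pos_iff_nonempty.mp hm
  choose L hLpos hLlip using hA1
  set Λ : ℝ := ∑ i, L i with hΛ
  have hΛpos : 0 < Λ := Finset.sum_pos (fun i _ => hLpos i) Finset.univ_nonempty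
  have hLle : ∀ i, L i ≤ Λ := fun i =>
    Finset.single_le_sum (fun j _ => (hLpos j).le) (Finset.mem_univ i)
  set φ : ℕ → ℝ := fun k => -psi m n Gl Gu (x k) (d k) with hφ
  have hφpos : ∀ k, 0 < φ k := fun k => neg_pos.mpr (hdesc k)
  have hψeq : ∀ k, psi m n Gl Gu (x k) (d k) = -φ k := fun k => by simp [hφ]
  have hdec : ∀ (k : ℕ) (i : Fin m),
      Gl i (x (k+1)) ≤ Gl i (x k) - ρ * t k * φ k ∧
      Gu i (x (k+1)) ≤ Gu i (x k) - ρ * t k * φ k := by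
    intro k i
    have h := ((ht k).2).1 i
    rw [← hx k] at h
    have hψ := hψeq k
    constructor
    · have := h.1; rw [hψ] at this; linarith
    · have := h.2; rw [hψ] at this; linarith
  have hρtφ : ∀ k, 0 < ρ * t k * φ k := fun k =>
    mul_pos (mul_pos hρ (ht k).1) (hφpos k)
  have hmono : ∀ (i : Fin m) (k : ℕ),
      Gl i (x (k+1)) ≤ Gl i (x k) ∧ Gu i (x (k+1)) ≤ Gu i (x k) := by
    intro i k
    have h := hdec k i
    have := hρtφ k
    exact ⟨h.1.trans (by linarith), h.2.trans (by linarith)⟩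
  have hlevel : ∀ k, x k ∈ LevelSet m n Gl Gu (x 0) := by
    intro k
    induction k with
    | zero => exact fun i => ⟨le_refl _, le_refl _⟩
    | succ k ih => exact fun i => ⟨(hmono i k).1.trans (ih i).1, (hmono i k).2.trans (ih i).2⟩
  obtain ⟨⟨Cl, hCl⟩, -⟩ := hA2 x hlevel hmono ⟨0, hm⟩
  have hterm_nonneg : ∀ k, 0 ≤ ρ * (t k * φ k) := fun k =>
    le_of_lt (mul_pos hρ (mul_pos (ht k).1 (hφpos k)))
  have hpartial : ∀ N, ∑ k ∈ Finset.range N, ρ * (t k * φ k) ≤ Gl ⟨0, hm⟩ (x 0) - Cl := by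
    intro N
    have step : ∀ k, ρ * (t k * φ k) ≤ Gl ⟨0, hm⟩ (x k) - Gl ⟨0, hm⟩ (x (k+1)) := by
      intro k
      have h := (hdec k ⟨0, hm⟩).1
      have e : ρ * (t k * φ k) = ρ * t k * φ k := by ring
      linarith [e.le, e.ge]
    calc ∑ k ∈ Finset.range N, ρ * (t k * φ k)
        ≤ ∑ k ∈ Finset.range N, (Gl ⟨0, hm⟩ (x k) - Gl ⟨0, hm⟩ (x (k+1))) :=
          Finset.sum_le_sum fun k _ => step k
      _ = Gl ⟨0, hm⟩ (x 0) - Gl ⟨0, hm⟩ (x N) :=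
          Finset.sum_range_sub' (fun k => Gl ⟨0, hm⟩ (x k)) N
      _ ≤ Gl ⟨0, hm⟩ (x 0) - Cl := by linarith [hCl N]
  have hsum1 : Summable (fun k => ρ * (t k * φ k)) :=
    summable_of_sum_range_le hterm_nonneg hpartial
  have hdpos : ∀ k, 0 < ‖d k‖ := by
    intro k
    rcases eq_or_ne (d k) 0 with h | h
    · exfalso
      have h0 := hdesc k
      rw [h, psi_zero m n hm Gl Gu (x k)] at h0
      exact lt_irrefl 0 h0
    · exact norm_pos_iff.mpr h
  have hlip : ∀ k, (1 - σ) * φ k ≤ 2 * Λ * (t k * ‖d k‖^2) := by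
    intro k
    have hW2 := ((ht k).2).2
    rw [← hx k] at hW2
    have hnorm : ‖x (k+1) - x k‖ = t k * ‖d k‖ := by
      rw [hx k]
      rw [add_sub_cancel_left, norm_smul]
      simp [abs_of_pos (ht k).1]
    have hC : ∀ i : Fin m,
        ‖gloVec n (Gl i) (Gu i) (x (k+1)) - gloVec n (Gl i) (Gu i) (x k)‖ ≤ Λ * (t k * ‖d k‖) ∧
        ‖ghiVec n (Gl i) (Gu i) (x (k+1)) - ghiVec n (Gl i) (Gu i) (x k)‖ ≤ Λ * (t k * ‖d k‖) := by
      intro i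
      have h := hLlip i (x (k+1)) (hlevel (k+1)) (x k) (hlevel k)
      have hb : L i * ‖x (k+1) - x k‖ ≤ Λ * (t k * ‖d k‖) := by
        rw [hnorm]
        exact mul_le_mul_of_nonneg_right (hLle i)
          (le_of_lt (mul_pos (ht k).1 (hdpos k)))
      exact ⟨h.1.trans hb, h.2.trans hb⟩
    have hlipψ := psi_lip m n hm Gl Gu (x (k+1)) (x k) (d k) (Λ * (t k * ‖d k‖)) hC
    rw [hψeq k] at hW2 hlipψ
    have hsq : ‖d k‖^2 = ‖d k‖ * ‖d k‖ := sq (‖d k‖) ▸ sq (‖d k‖) ▸ by ring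
    nlinarith [hW2, hlipψ]
  have hσ1 : (0:ℝ) < 1 - σ := by linarith
  have hcomp : Summable (fun k => (2 * Λ / ((1 - σ) * ρ)) * (ρ * (t k * φ k))) :=
    hsum1.mul_left _
  refine Summable.of_nonneg_of_le (fun k => by positivity) (fun k => ?_) hcomp
  · rw [hψeq k, neg_sq]
    rw [div_le_iff₀ (pow_pos (hdpos k) 2)]
    have h1 := hlip k
    have h2 := (hφpos k).le
    have e : (2 * Λ / ((1 - σ) * ρ)) * (ρ * (t k * φ k))
        = (2 * Λ * (t k * φ k)) / (1 - σ) := by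
      field_simp
    rw [e, div_mul_eq_mul_div, le_div_iff₀ hσ1]
    nlinarith [mul_le_mul_of_nonneg_right h1 h2]
end

section
/- Assume Assumption A2 holds for the initial point x⁰. Consider iterates x^{k+1} = x^k + t_k d^k for k ≥ 0, where each d^k ∈ ℝⁿ satisfies ψ_{x^k}(d^k) < 0 and each step length t_k > 0 satisfies condition (W1): G̲_i(x^k + t_k d^k) ≤ G̲_i(x^k) + ρ t_k ψ_{x^k}(d^k) and G̅_i(x^k + t_k d^k) ≤ G̅_i(x^k) + ρ t_k ψ_{x^k}(d^k) for all i, where ρ ∈ (0,1). Then Σ_{k≥0} t_k·|ψ_{x^k}(d^k)| < +∞. -/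
open scoped BigOperators

theorem armijo_sum_finite (m n : ℕ) (hm : 0 < m) (hn : 0 < n)
    (Gl Gu : Fin m → EuclideanSpace ℝ (Fin n) → ℝ)
    (hGl : ∀ i, ContDiff ℝ 1 (Gl i)) (hGu : ∀ i, ContDiff ℝ 1 (Gu i))
    (hle : ∀ (i : Fin m) (x : EuclideanSpace ℝ (Fin n)), Gl i x ≤ Gu i x)
    (ρ : ℝ) (hρ0 : 0 < ρ) (hρ1 : ρ < 1)
    (x d : ℕ → EuclideanSpace ℝ (Fin n)) (t : ℕ → ℝ)
    (hx : ∀ k : ℕ, x (k+1) = x k + t k • d k)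
    (hdesc : ∀ k : ℕ, psi m n Gl Gu (x k) (d k) < 0)
    (ht : ∀ k : ℕ, 0 < t k ∧ ∀ i : Fin m,
      Gl i (x k + t k • d k) ≤ Gl i (x k) + ρ * t k * psi m n Gl Gu (x k) (d k) ∧
      Gu i (x k + t k • d k) ≤ Gu i (x k) + ρ * t k * psi m n Gl Gu (x k) (d k))
    (hA2 : AssumptionA2 m n Gl Gu (x 0)) :
    Summable (fun k : ℕ => t k * |psi m n Gl Gu (x k) (d k)|) := by
  
  set ψ : ℕ → ℝ := fun k => psi m n Gl Gu (x k) (d k) with hψ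
  -- descent in each coordinate
  have hstep : ∀ (k : ℕ) (i : Fin m),
      Gl i (x (k+1)) ≤ Gl i (x k) + ρ * t k * ψ k ∧
      Gu i (x (k+1)) ≤ Gu i (x k) + ρ * t k * ψ k := by
    intro k i
    rw [hx k]
    exact (ht k).2 i
  have hneg : ∀ k, ρ * t k * ψ k < 0 := fun k =>
    mul_neg_of_pos_of_neg (mul_pos hρ0 (ht k).1) (hdesc k)
  have hmono : ∀ (i : Fin m) (k : ℕ),
      Gl i (x (k+1)) ≤ Gl i (x k) ∧ Gu i (x (k+1)) ≤ Gu i (x k) := by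
    intro i k
    constructor
    · exact (hstep k i).1.trans (by linarith [hneg k])
    · exact (hstep k i).2.trans (by linarith [hneg k])
  have hlev : ∀ k, x k ∈ LevelSet m n Gl Gu (x 0) := by
    intro k
    induction k with
    | zero => intro i; exact ⟨le_refl _, le_refl _⟩
    | succ k ih =>
      intro i
      exact ⟨(hmono i k).1.trans (ih i).1, (hmono i k).2.trans (ih i).2⟩
  obtain ⟨i0⟩ : Nonempty (Fin m) := ⟨⟨0, hm⟩⟩
  obtain ⟨⟨Cl, hCl⟩, -⟩ := hA2 x hlev (fun i k => hmono i k) i0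
  -- partial sums bounded
  have habs : ∀ k, |ψ k| = -ψ k := fun k => abs_of_neg (hdesc k)
  have hsum : ∀ N : ℕ, ∑ k ∈ Finset.range N, ρ * (t k * |ψ k|) ≤ Gl i0 (x 0) - Cl := by
    intro N
    have key : ∀ N : ℕ, Gl i0 (x N) + ∑ k ∈ Finset.range N, ρ * (t k * |ψ k|) ≤ Gl i0 (x 0) := by
      intro N
      induction N with
      | zero => simp
      | succ N ih =>
        rw [Finset.sum_range_succ]
        have h1 := (hstep N i0).1
        have : ρ * (t N * |ψ N|) = -(ρ * t N * ψ N) := by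
          rw [habs N]; ring
        linarith
    linarith [key N, hCl N]
  have hρsum : Summable (fun k => ρ * (t k * |ψ k|)) := by
    apply summable_of_sum_range_le (c := Gl i0 (x 0) - Cl)
    · intro k
      exact mul_nonneg hρ0.le (mul_nonneg (ht k).1.le (abs_nonneg _))
    · exact hsum
  have h2 := hρsum.mul_left ρ⁻¹
  have heq : (fun k => ρ⁻¹ * (ρ * (t k * |ψ k|))) = fun k => t k * |ψ k| := by
    funext k; rw [← mul_assoc, inv_mul_cancel₀ hρ0.ne', one_mul]
  rw [heq] at h2
  exact h2
end

section
/- For all x, y, d ∈ ℝⁿ, the scalarization satisfies the estimate ψ_y(d) − ψ_x(d) ≤ max_{1≤i≤m} ( ‖g̲_i(y) − g̲_i(x)‖ + ‖g̅_i(y) − g̅_i(x)‖ )·‖d‖, where ‖·‖ is the Euclidean norm. -/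
open scoped BigOperators

private lemma cs_aux (n : ℕ) (a u : EuclideanSpace ℝ (Fin n)) :
    ∑ j, a j * u j ≤ ‖a‖ * ‖u‖ := by
  have h := real_inner_le_norm a u
  simpa [PiLp.inner_apply, RCLike.inner_apply, conj_trivial, mul_comm] using h

private lemma norm_mono_aux (n : ℕ) (u v : EuclideanSpace ℝ (Fin n))
    (h : ∀ j, (u j)^2 ≤ (v j)^2) : ‖u‖ ≤ ‖v‖ := by
  rw [EuclideanSpace.norm_eq, EuclideanSpace.norm_eq]
  apply Real.sqrt_le_sqrt
  apply Finset.sum_le_sum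
  intro j _
  simpa [Real.norm_eq_abs, sq_abs] using h j

theorem psi_diff_bound (m n : ℕ) (hm : 0 < m) (hn : 0 < n)
    (Gl Gu : Fin m → EuclideanSpace ℝ (Fin n) → ℝ)
    (hGl : ∀ i, ContDiff ℝ 1 (Gl i)) (hGu : ∀ i, ContDiff ℝ 1 (Gu i))
    (hle : ∀ (i : Fin m) (x : EuclideanSpace ℝ (Fin n)), Gl i x ≤ Gu i x)
    (x y d : EuclideanSpace ℝ (Fin n)) :
    psi m n Gl Gu y d - psi m n Gl Gu x d ≤
      (⨆ i : Fin m,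
        (‖gloVec n (Gl i) (Gu i) y - gloVec n (Gl i) (Gu i) x‖ +
         ‖ghiVec n (Gl i) (Gu i) y - ghiVec n (Gl i) (Gu i) x‖)) * ‖d‖ := by
  have hne : Nonempty (Fin m) := ⟨⟨0, hm⟩⟩
  have hd : (0:ℝ) ≤ ‖d‖ := norm_nonneg d
  set T : EuclideanSpace ℝ (Fin n) → Fin m → ℝ := fun z i => (1 / 2 : ℝ) *
    ((∑ j : Fin n, (glo n (Gl i) (Gu i) z j + ghi n (Gl i) (Gu i) z j) * d j) +
     (∑ j : Fin n, (ghi n (Gl i) (Gu i) z j - glo n (Gl i) (Gu i) z j) * |d j|)) with hT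
  set C : Fin m → ℝ := fun i =>
    ‖gloVec n (Gl i) (Gu i) y - gloVec n (Gl i) (Gu i) x‖ +
    ‖ghiVec n (Gl i) (Gu i) y - ghiVec n (Gl i) (Gu i) x‖ with hC
  have key : ∀ i : Fin m, T y i ≤ T x i + C i * ‖d‖ := by
    intro i
    set a : EuclideanSpace ℝ (Fin n) :=
      gloVec n (Gl i) (Gu i) y - gloVec n (Gl i) (Gu i) x with ha
    set b : EuclideanSpace ℝ (Fin n) :=
      ghiVec n (Gl i) (Gu i) y - ghiVec n (Gl i) (Gu i) x with hb
    set u : EuclideanSpace ℝ (Fin n) := WithLp.toLp 2 (fun j => (d j - |d j|) / 2) with hu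
    set w : EuclideanSpace ℝ (Fin n) := WithLp.toLp 2 (fun j => (d j + |d j|) / 2) with hw
    have haj : ∀ j, a j = glo n (Gl i) (Gu i) y j - glo n (Gl i) (Gu i) x j := by
      intro j
      simp [ha, gloVec]
    have hbj : ∀ j, b j = ghi n (Gl i) (Gu i) y j - ghi n (Gl i) (Gu i) x j := by
      intro j
      simp [hb, ghiVec]
    have heq : T y i - T x i = (∑ j, a j * u j) + (∑ j, b j * w j) := by
      simp only [hT, Finset.mul_sum, ← Finset.sum_add_distrib, ← Finset.sum_sub_distrib]
      apply Finset.sum_congr rfl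
      intro j _
      rw [haj, hbj]
      simp only [hu, hw]
      ring
    have hu2 : ∀ j, (u j)^2 ≤ (d j)^2 := by
      intro j
      have : u j = (d j - |d j|)/2 := rfl
      rw [this]
      rcases abs_cases (d j) with ⟨h1, _⟩ | ⟨h1, _⟩ <;> rw [h1] <;> nlinarith
    have hw2 : ∀ j, (w j)^2 ≤ (d j)^2 := by
      intro j
      have : w j = (d j + |d j|)/2 := rfl
      rw [this]
      rcases abs_cases (d j) with ⟨h1, _⟩ | ⟨h1, _⟩ <;> rw [h1] <;> nlinarith
    have hdj : ∀ j : Fin n, ((d : EuclideanSpace ℝ (Fin n)) j)^2 = (d j)^2 := fun _ => rfl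
    have hun : ‖u‖ ≤ ‖d‖ := norm_mono_aux n u d (by intro j; exact hu2 j)
    have hwn : ‖w‖ ≤ ‖d‖ := norm_mono_aux n w d (by intro j; exact hw2 j)
    have h1 : (∑ j, a j * u j) ≤ ‖a‖ * ‖d‖ :=
      (cs_aux n a u).trans (by
        have := mul_le_mul_of_nonneg_left hun (norm_nonneg a); linarith)
    have h2 : (∑ j, b j * w j) ≤ ‖b‖ * ‖d‖ :=
      (cs_aux n b w).trans (by
        have := mul_le_mul_of_nonneg_left hwn (norm_nonneg b); linarith)
    have : T y i - T x i ≤ (‖a‖ + ‖b‖) * ‖d‖ := by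
      rw [heq]; nlinarith
    simpa [hC, ha, hb, add_mul] using by linarith
  have hbddT : ∀ z, BddAbove (Set.range (T z)) := fun z => Set.Finite.bddAbove (Set.finite_range _)
  have hbddC : BddAbove (Set.range C) := Set.Finite.bddAbove (Set.finite_range _)
  have hmain : psi m n Gl Gu y d ≤ (⨆ i, C i) * ‖d‖ + psi m n Gl Gu x d := by
    rw [psi]
    apply ciSup_le
    intro i
    have h1 : T y i ≤ T x i + C i * ‖d‖ := key i
    have h2 : T x i ≤ psi m n Gl Gu x d := by
      rw [psi]; exact le_ciSup (hbddT x) i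
    have h3 : C i * ‖d‖ ≤ (⨆ i, C i) * ‖d‖ :=
      mul_le_mul_of_nonneg_right (le_ciSup hbddC i) hd
    calc T y i ≤ T x i + C i * ‖d‖ := h1
      _ ≤ psi m n Gl Gu x d + (⨆ i, C i) * ‖d‖ := by linarith
      _ = (⨆ i, C i) * ‖d‖ + psi m n Gl Gu x d := by ring
  linarith
end

section
/- (Convergence of the steepest descent method) Assume Assumptions A1 and A2 hold for the initial point x⁰. Consider the iteration x^{k+1} = x^k + t_k v(x^k) for k ≥ 0, where v(x^k) ≠ 0 for all k and each t_k > 0 satisfies the standard Wolfe conditions at x^k along v(x^k). Then Σ_{k≥0} ‖v(x^k)‖² < +∞; in particular lim_{k→∞} ‖v(x^k)‖ = 0. -/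
open scoped BigOperators

noncomputable def phi (m n : ℕ) (Gl Gu : Fin m → EuclideanSpace ℝ (Fin n) → ℝ)
    (i : Fin m) (x v : EuclideanSpace ℝ (Fin n)) : ℝ :=
  (1 / 2 : ℝ) *
    ((∑ j : Fin n, (glo n (Gl i) (Gu i) x j + ghi n (Gl i) (Gu i) x j) * v j) +
     (∑ j : Fin n, (ghi n (Gl i) (Gu i) x j - glo n (Gl i) (Gu i) x j) * |v j|))

lemma psi_eq (m n : ℕ) (Gl Gu : Fin m → EuclideanSpace ℝ (Fin n) → ℝ)
    (x v : EuclideanSpace ℝ (Fin n)) :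
    psi m n Gl Gu x v = ⨆ i : Fin m, phi m n Gl Gu i x v := rfl

lemma phi_le_psi (m n : ℕ) (Gl Gu : Fin m → EuclideanSpace ℝ (Fin n) → ℝ)
    (i : Fin m) (x v : EuclideanSpace ℝ (Fin n)) :
    phi m n Gl Gu i x v ≤ psi m n Gl Gu x v := by
  rw [psi_eq]
  exact le_ciSup (f := fun i => phi m n Gl Gu i x v)
    (Set.Finite.bddAbove (Set.finite_range _)) i

lemma cs {n : ℕ} (u d : EuclideanSpace ℝ (Fin n)) :
    ∑ j : Fin n, u j * d j ≤ ‖u‖ * ‖d‖ := by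
  have h := real_inner_le_norm u d
  simpa [PiLp.inner_apply, RCLike.inner_apply, conj_trivial, mul_comm] using h

lemma norm_abs_eq {n : ℕ} (d da : EuclideanSpace ℝ (Fin n)) (h : ∀ j, da j = |d j|) :
    ‖da‖ = ‖d‖ := by
  rw [EuclideanSpace.norm_eq, EuclideanSpace.norm_eq]
  exact congrArg Real.sqrt (Finset.sum_congr rfl (fun j _ => by simp [h j, abs_abs]))

lemma phi_sub_phi (m n : ℕ) (Gl Gu : Fin m → EuclideanSpace ℝ (Fin n) → ℝ)
    (i : Fin m) (y z d : EuclideanSpace ℝ (Fin n)) :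
    phi m n Gl Gu i y d - phi m n Gl Gu i z d ≤
      (‖gloVec n (Gl i) (Gu i) y - gloVec n (Gl i) (Gu i) z‖ +
       ‖ghiVec n (Gl i) (Gu i) y - ghiVec n (Gl i) (Gu i) z‖) * ‖d‖ := by
  classical
  set u1 : EuclideanSpace ℝ (Fin n) := gloVec n (Gl i) (Gu i) y - gloVec n (Gl i) (Gu i) z with hu1
  set u2 : EuclideanSpace ℝ (Fin n) := ghiVec n (Gl i) (Gu i) y - ghiVec n (Gl i) (Gu i) z with hu2
  set da : EuclideanSpace ℝ (Fin n) := WithLp.toLp 2 (fun j => |d j|) with hda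
  have hu1j : ∀ j, u1 j = glo n (Gl i) (Gu i) y j - glo n (Gl i) (Gu i) z j := by
    intro j; simp [hu1, gloVec]
  have hu2j : ∀ j, u2 j = ghi n (Gl i) (Gu i) y j - ghi n (Gl i) (Gu i) z j := by
    intro j; simp [hu2, ghiVec]
  have hnda : ‖da‖ = ‖d‖ := norm_abs_eq d da (fun j => rfl)
  have c1 : ∑ j : Fin n, u1 j * d j ≤ ‖u1‖ * ‖d‖ := cs u1 d
  have c2 : ∑ j : Fin n, u2 j * d j ≤ ‖u2‖ * ‖d‖ := cs u2 d
  have c3 : ∑ j : Fin n, u2 j * da j ≤ ‖u2‖ * ‖d‖ := by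
    have := cs u2 da; rwa [hnda] at this
  have c4 : ∑ j : Fin n, (-(u1 j)) * da j ≤ ‖u1‖ * ‖d‖ := by
    have := cs (-u1) da
    rw [hnda, norm_neg] at this
    simpa using this
  have key : phi m n Gl Gu i y d - phi m n Gl Gu i z d =
      (1/2 : ℝ) * ((∑ j : Fin n, u1 j * d j) + (∑ j : Fin n, u2 j * d j)
        + ((∑ j : Fin n, u2 j * da j) + (∑ j : Fin n, (-(u1 j)) * da j))) := by
    simp only [phi, hu1j, hu2j, hda, PiLp.toLp_apply, mul_add, Finset.mul_sum, ← Finset.sum_add_distrib,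
      ← Finset.sum_sub_distrib]
    exact Finset.sum_congr rfl (fun j _ => by ring)
  rw [key]
  nlinarith [c1, c2, c3, c4]
theorem steepest_descent_convergence (m n : ℕ) (hm : 0 < m) (hn : 0 < n)
    (Gl Gu : Fin m → EuclideanSpace ℝ (Fin n) → ℝ)
    (hGl : ∀ i, ContDiff ℝ 1 (Gl i)) (hGu : ∀ i, ContDiff ℝ 1 (Gu i))
    (hle : ∀ (i : Fin m) (x : EuclideanSpace ℝ (Fin n)), Gl i x ≤ Gu i x)
    (vv : EuclideanSpace ℝ (Fin n) → EuclideanSpace ℝ (Fin n))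
    (hvmin : ∀ y w : EuclideanSpace ℝ (Fin n),
      psi m n Gl Gu y (vv y) + (1/2) * ‖vv y‖^2 ≤ psi m n Gl Gu y w + (1/2) * ‖w‖^2)
    (ρ σ : ℝ) (hρ : 0 < ρ) (hρσ : ρ < σ) (hσ : σ < 1)
    (x : ℕ → EuclideanSpace ℝ (Fin n)) (t : ℕ → ℝ)
    (hx : ∀ k : ℕ, x (k+1) = x k + t k • vv (x k))
    (hvne : ∀ k : ℕ, vv (x k) ≠ 0)
    (ht : ∀ k : ℕ, 0 < t k ∧ StdWolfe m n Gl Gu ρ σ (x k) (vv (x k)) (t k))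
    (hA1 : AssumptionA1 m n Gl Gu (x 0))
    (hA2 : AssumptionA2 m n Gl Gu (x 0)) :
    Summable (fun k : ℕ => ‖vv (x k)‖^2) ∧
      Filter.Tendsto (fun k : ℕ => ‖vv (x k)‖) Filter.atTop (nhds 0) := by
  classical
  haveI : Nonempty (Fin m) := ⟨⟨0, hm⟩⟩
  set ψ : ℕ → ℝ := fun k => psi m n Gl Gu (x k) (vv (x k)) with hψdef
  -- psi at the step direction is ≤ -1/2 ‖v‖²
  have hψle : ∀ k, ψ k ≤ -((1:ℝ)/2) * ‖vv (x k)‖^2 := by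
    intro k
    have h0 := hvmin (x k) 0
    rw [psi_zero m n hm Gl Gu (x k)] at h0
    simp only [norm_zero] at h0
    have : (0:ℝ)^2 = 0 := by norm_num
    rw [this] at h0
    simp only [hψdef]
    linarith
  have hvpos : ∀ k, (0:ℝ) < ‖vv (x k)‖^2 := by
    intro k
    have : 0 < ‖vv (x k)‖ := norm_pos_iff.mpr (hvne k)
    positivity
  have hψneg : ∀ k, ψ k < 0 := by
    intro k
    have := hψle k
    nlinarith [hvpos k]
  -- decrease of the objectives
  have hdec : ∀ (k : ℕ) (i : Fin m),
      Gl i (x (k+1)) ≤ Gl i (x k) ∧ Gu i (x (k+1)) ≤ Gu i (x k) := by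
    intro k i
    obtain ⟨htk, hW⟩ := ht k
    have hW1 := hW.1 i
    have hnp : ρ * t k * ψ k ≤ 0 := by
      have h1 : 0 ≤ ρ * t k := le_of_lt (mul_pos hρ htk)
      exact mul_nonpos_of_nonneg_of_nonpos h1 (le_of_lt (hψneg k))
    constructor
    · calc Gl i (x (k+1)) = Gl i (x k + t k • vv (x k)) := by rw [hx k]
        _ ≤ Gl i (x k) + ρ * t k * ψ k := hW1.1
        _ ≤ Gl i (x k) := by linarith
    · calc Gu i (x (k+1)) = Gu i (x k + t k • vv (x k)) := by rw [hx k]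
        _ ≤ Gu i (x k) + ρ * t k * ψ k := hW1.2
        _ ≤ Gu i (x k) := by linarith
  -- iterates stay in the level set
  have hmem : ∀ k, x k ∈ LevelSet m n Gl Gu (x 0) := by
    intro k
    induction k with
    | zero => intro i; exact ⟨le_refl _, le_refl _⟩
    | succ k ih =>
      intro i
      exact ⟨le_trans (hdec k i).1 (ih i).1, le_trans (hdec k i).2 (ih i).2⟩
  -- uniform Lipschitz constant
  choose Lf hLf using hA1
  set L : ℝ := ∑ i : Fin m, Lf i with hLdef
  have hLpos : 0 < L := Finset.sum_pos (fun i _ => (hLf i).1) ⟨⟨0, hm⟩, Finset.mem_univ _⟩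
  have hLfle : ∀ i, Lf i ≤ L :=
    fun i => Finset.single_le_sum (fun j _ => le_of_lt (hLf j).1) (Finset.mem_univ i)
  -- Lipschitz property of psi
  have hpsiLip : ∀ y ∈ LevelSet m n Gl Gu (x 0), ∀ z ∈ LevelSet m n Gl Gu (x 0),
      ∀ d : EuclideanSpace ℝ (Fin n),
      psi m n Gl Gu y d ≤ psi m n Gl Gu z d + 2 * L * ‖y - z‖ * ‖d‖ := by
    intro y hy z hz d
    rw [psi_eq]
    apply ciSup_le
    intro i
    have h1 := phi_sub_phi m n Gl Gu i y z d
    have h2 := (hLf i).2 y hy z hz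
    have h3 := phi_le_psi m n Gl Gu i z d
    have hd0 : (0:ℝ) ≤ ‖d‖ := norm_nonneg d
    have hyz0 : (0:ℝ) ≤ ‖y - z‖ := norm_nonneg _
    have h4 : (‖gloVec n (Gl i) (Gu i) y - gloVec n (Gl i) (Gu i) z‖ +
        ‖ghiVec n (Gl i) (Gu i) y - ghiVec n (Gl i) (Gu i) z‖) * ‖d‖ ≤
        2 * L * ‖y - z‖ * ‖d‖ := by
      apply mul_le_mul_of_nonneg_right _ hd0
      have := hLfle i
      nlinarith [h2.1, h2.2]
    linarith
  -- curvature condition gives lower bound on t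
  have hkey : ∀ k, (1 - σ) * ‖vv (x k)‖^2 ≤ 8 * L * (t k * (-ψ k)) := by
    intro k
    obtain ⟨htk, hW⟩ := ht k
    have hW2 := hW.2
    have hxk1 : x (k+1) = x k + t k • vv (x k) := hx k
    have hlip := hpsiLip (x (k+1)) (hmem (k+1)) (x k) (hmem k) (vv (x k))
    have hnorm : ‖x (k+1) - x k‖ = t k * ‖vv (x k)‖ := by
      rw [hxk1]
      simp [norm_smul, abs_of_pos htk]
    rw [hnorm] at hlip
    rw [← hxk1] at hW2
    -- hW2 : σ * ψ k ≤ psi (x (k+1)) (vv (x k))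
    have h1 : (1 - σ) * (-ψ k) ≤ 2 * L * t k * ‖vv (x k)‖^2 := by
      have hsq : ‖vv (x k)‖ * ‖vv (x k)‖ = ‖vv (x k)‖^2 := (sq ‖vv (x k)‖).symm
      nlinarith [hψle k, hlip, hW2]
    have h2 : (1:ℝ)/2 * ‖vv (x k)‖^2 ≤ -ψ k := by linarith [hψle k]
    have hp : 0 < -ψ k := by linarith [hψneg k]
    have h1σ : (0:ℝ) < 1 - σ := by linarith
    nlinarith [h1, h2, mul_le_mul_of_nonneg_left h2
      (by positivity : (0:ℝ) ≤ 8 * L * t k), mul_pos htk hp]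
  -- telescoping sum bound
  set i0 : Fin m := ⟨0, hm⟩
  obtain ⟨⟨Cl, hCl⟩, -⟩ := hA2 x hmem (fun i k => hdec k i) i0
  have hsumρ : ∀ N : ℕ, ∑ k ∈ Finset.range N, ρ * (t k * (-ψ k)) ≤ Gl i0 (x 0) - Cl := by
    intro N
    have hterm : ∀ k, ρ * (t k * (-ψ k)) ≤ Gl i0 (x k) - Gl i0 (x (k+1)) := by
      intro k
      obtain ⟨htk, hW⟩ := ht k
      have := (hW.1 i0).1
      rw [← hx k] at this
      -- Gl i0 (x (k+1)) ≤ Gl i0 (x k) + ρ * t k * ψ k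
      nlinarith
    calc ∑ k ∈ Finset.range N, ρ * (t k * (-ψ k))
        ≤ ∑ k ∈ Finset.range N, (Gl i0 (x k) - Gl i0 (x (k+1))) :=
          Finset.sum_le_sum (fun k _ => hterm k)
      _ = Gl i0 (x 0) - Gl i0 (x N) := by
          rw [← Finset.sum_range_sub' (fun k => Gl i0 (x k)) N]
      _ ≤ Gl i0 (x 0) - Cl := by linarith [hCl N]
  -- partial sums of ‖v‖² are bounded
  set c : ℝ := 8 * L / (1 - σ) with hcdef
  have h1σ : (0:ℝ) < 1 - σ := by linarith
  have hcpos : 0 < c := by positivity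
  have hvk : ∀ k, ‖vv (x k)‖^2 ≤ c * (t k * (-ψ k)) := by
    intro k
    have := hkey k
    rw [hcdef, div_mul_eq_mul_div, le_div_iff₀ h1σ]
    nlinarith
  have htψpos : ∀ k, 0 ≤ t k * (-ψ k) := by
    intro k
    exact le_of_lt (mul_pos (ht k).1 (by linarith [hψneg k]))
  have hbound : ∀ N : ℕ, ∑ k ∈ Finset.range N, ‖vv (x k)‖^2 ≤
      c * ((Gl i0 (x 0) - Cl) / ρ) := by
    intro N
    calc ∑ k ∈ Finset.range N, ‖vv (x k)‖^2
        ≤ ∑ k ∈ Finset.range N, c * (t k * (-ψ k)) :=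
          Finset.sum_le_sum (fun k _ => hvk k)
      _ = c * ∑ k ∈ Finset.range N, (t k * (-ψ k)) := by rw [Finset.mul_sum]
      _ ≤ c * ((Gl i0 (x 0) - Cl) / ρ) := by
          apply mul_le_mul_of_nonneg_left _ (le_of_lt hcpos)
          rw [le_div_iff₀ hρ]
          have := hsumρ N
          rw [mul_comm]
          rw [← Finset.mul_sum] at this
          linarith
  have hsummable : Summable (fun k : ℕ => ‖vv (x k)‖^2) :=
    summable_of_sum_range_le (fun k => by positivity) hbound
  refine ⟨hsummable, ?_⟩
  have h0 : Filter.Tendsto (fun k : ℕ => ‖vv (x k)‖^2) Filter.atTop (nhds 0) :=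
    hsummable.tendsto_atTop_zero
  have hsqrt : Filter.Tendsto (fun k : ℕ => Real.sqrt (‖vv (x k)‖^2))
      Filter.atTop (nhds 0) := by
    have := (Real.continuous_sqrt.tendsto 0).comp h0
    rw [Real.sqrt_zero] at this
    exact this
  convert hsqrt using 2 with k
  rw [Real.sqrt_sq (norm_nonneg _)]
end
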